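/- Let g : [-Q̄, Q̄] → ℝ be continuous, Q̃ ∈ [-Q̄, Q̄], and define A(Q, Q') := g(Q̃) - ((Q'-Q̃)/(Q'-Q)) g(Q) - ((Q̃-Q)/(Q'-Q)) g(Q') for Q ≤ Q̃ ≤ Q' with Q < Q', and A(Q,Q') := 0 if Q = Q'. If min A = 0 over {(Q,Q') : -Q̄ ≤ Q ≤ Q̃ ≤ Q' ≤ Q̄}, then the continuous concave envelope ĝ of g satisfies ĝ(Q̃) = g(Q̃). -/
import Mathlib

lemma concave_affine' (s : Set ℝ) (hs : Convex ℝ s) (c m x0 : ℝ) :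
    ConcaveOn ℝ s (fun x => c + m * (x - x0)) := by
  refine ⟨hs, ?_⟩
  intro x _ y _ a b ha hb hab
  simp only [smul_eq_mul]
  have hb' : b = 1 - a := by linarith
  subst hb'
  ring_nf
  nlinarith [sq_nonneg a]

lemma concave_min_const_affine' (s : Set ℝ) (hs : Convex ℝ s) (B c m x0 : ℝ) :
    ConcaveOn ℝ s (fun x => min B (c + m * (x - x0))) := by
  refine ⟨hs, ?_⟩
  intro x _ y _ a b ha hb hab
  simp only [smul_eq_mul]
  refine le_min ?_ ?_
  · calc a * min B (c + m * (x - x0)) + b * min B (c + m * (y - x0))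
        ≤ a * B + b * B := by
          gcongr <;> exact min_le_left _ _
      _ = B := by rw [← add_mul, hab, one_mul]
  · calc a * min B (c + m * (x - x0)) + b * min B (c + m * (y - x0))
        ≤ a * (c + m * (x - x0)) + b * (c + m * (y - x0)) := by
          gcongr <;> exact min_le_right _ _
      _ = c + m * (a * x + b * y - x0) := by
          have hb' : b = 1 - a := by linarith
          subst hb'; ring


/-- Let `g` be continuous on `[-Q̄, Q̄]`, `Q̃ ∈ [-Q̄, Q̄]`, and
`A(Q,Q') = g(Q̃) - ((Q'-Q̃)/(Q'-Q)) g(Q) - ((Q̃-Q)/(Q'-Q)) g(Q')` for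
`-Q̄ ≤ Q ≤ Q̃ ≤ Q' ≤ Q̄` with `Q < Q'`, and `A(Q,Q') = 0` if `Q = Q'`.
If the minimum of `A` over this set is `0` (i.e. `A ≥ 0` there, the value `0` being
attained at `Q = Q'`), then the continuous concave envelope `ĝ` of `g` satisfies
`ĝ(Q̃) = g(Q̃)`. -/
theorem stmt5 (Qb : ℝ) (hQb : 0 < Qb) (g : ℝ → ℝ)
    (hg : ContinuousOn g (Set.Icc (-Qb) Qb))
    (Qt : ℝ) (hQt : Qt ∈ Set.Icc (-Qb) Qb)
    (A : ℝ → ℝ → ℝ)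
    (hA : ∀ Q Q' : ℝ, A Q Q' =
      if Q < Q' then
        g Qt - ((Q' - Qt) / (Q' - Q)) * g Q - ((Qt - Q) / (Q' - Q)) * g Q'
      else 0)
    (hAmin : ∀ Q Q' : ℝ, -Qb ≤ Q → Q ≤ Qt → Qt ≤ Q' → Q' ≤ Qb → 0 ≤ A Q Q')
    (genv : ℝ → ℝ)
    (hdef : ∀ x ∈ Set.Icc (-Qb) Qb, genv x =
      sInf {r : ℝ | ∃ h : ℝ → ℝ, ContinuousOn h (Set.Icc (-Qb) Qb) ∧
        ConcaveOn ℝ (Set.Icc (-Qb) Qb) h ∧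
        (∀ z ∈ Set.Icc (-Qb) Qb, g z ≤ h z) ∧ r = h x}) :
    genv Qt = g Qt := by
  obtain ⟨hQtl, hQtr⟩ := hQt
  rw [hdef Qt ⟨hQtl, hQtr⟩]
  set S := {r : ℝ | ∃ h : ℝ → ℝ, ContinuousOn h (Set.Icc (-Qb) Qb) ∧
      ConcaveOn ℝ (Set.Icc (-Qb) Qb) h ∧
      (∀ z ∈ Set.Icc (-Qb) Qb, g z ≤ h z) ∧ r = h Qt} with hSdef
  -- bound on g
  obtain ⟨xm, hxm, hxmax⟩ := isCompact_Icc.exists_isMaxOn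
    (Set.nonempty_Icc.mpr (by linarith)) hg
  set C := g xm with hCdef
  have hC : ∀ x ∈ Set.Icc (-Qb) Qb, g x ≤ C := hxmax
  have hne : S.Nonempty :=
    ⟨C, fun _ => C, continuousOn_const, concaveOn_const C (convex_Icc _ _), hC, rfl⟩
  have hbdd : BddBelow S := by
    refine ⟨g Qt, ?_⟩
    rintro r ⟨h, _, _, hge, rfl⟩
    exact hge Qt ⟨hQtl, hQtr⟩
  have hlow : g Qt ≤ sInf S := by
    apply le_csInf hne
    rintro r ⟨h, _, _, hge, rfl⟩
    exact hge Qt ⟨hQtl, hQtr⟩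
  refine le_antisymm ?_ hlow
  -- the key slope inequality from A ≥ 0
  have key : ∀ Q Q', -Qb ≤ Q → Q < Qt → Qt < Q' → Q' ≤ Qb →
      (g Q' - g Qt) / (Q' - Qt) ≤ (g Qt - g Q) / (Qt - Q) := by
    intro Q Q' h1 h2 h3 h4
    have hQQ' : Q < Q' := h2.trans h3
    have h0 := hAmin Q Q' h1 h2.le h3.le h4
    rw [hA, if_pos hQQ'] at h0
    have hd : (0:ℝ) < Q' - Q := by linarith
    have h5 : (Q' - Qt) * g Q + (Qt - Q) * g Q' ≤ (Q' - Q) * g Qt := by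
      rw [← sub_nonneg]
      have e : (Q' - Q) * g Qt - ((Q' - Qt) * g Q + (Qt - Q) * g Q')
          = (Q' - Q) * (g Qt - (Q' - Qt) / (Q' - Q) * g Q - (Qt - Q) / (Q' - Q) * g Q') := by
        field_simp
        ring
      rw [e]
      exact mul_nonneg hd.le h0
    rw [div_le_div_iff₀ (by linarith) (by linarith)]
    nlinarith [h5]
  rcases eq_or_lt_of_le hQtl with hL | hL
  · -- left endpoint: Qt = -Qb
    apply le_of_forall_pos_le_add
    intro ε hε
    apply csInf_le hbdd
    have hcw := hg Qt ⟨hQtl, hQtr⟩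
    rw [Metric.continuousWithinAt_iff] at hcw
    obtain ⟨δ, hδ, hδ'⟩ := hcw ε hε
    set B := max C (g Qt + ε) with hBdef
    set M := (B - g Qt) / δ with hMdef
    have hCB : C ≤ B := le_max_left _ _
    have hgB : g Qt + ε ≤ B := le_max_right _ _
    have hM0 : 0 ≤ M := by
      apply div_nonneg _ hδ.le
      have := hC Qt ⟨hQtl, hQtr⟩
      linarith
    have hMδ : M * δ = B - g Qt := div_mul_cancel₀ _ (ne_of_gt hδ)
    refine ⟨fun x => min B (g Qt + ε + M * (x - Qt)), ?_, ?_, ?_, ?_⟩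
    · exact Continuous.continuousOn (by fun_prop)
    · exact concave_min_const_affine' _ (convex_Icc _ _) B (g Qt + ε) M Qt
    · intro z hz
      obtain ⟨hz1, hz2⟩ := hz
      have hz1' : Qt ≤ z := by rw [← hL]; exact hz1
      by_cases hdz : dist z Qt < δ
      · have h8 := hδ' ⟨hz1, hz2⟩ hdz
        rw [Real.dist_eq] at h8
        have h6 : g z < g Qt + ε := by
          have := abs_lt.mp h8
          linarith [this.2]
        refine le_min (le_trans (hC z ⟨hz1, hz2⟩) hCB) ?_
        have : 0 ≤ M * (z - Qt) := mul_nonneg hM0 (by linarith)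
        linarith
      · push_neg at hdz
        rw [Real.dist_eq, abs_of_nonneg (by linarith)] at hdz
        refine le_min (le_trans (hC z ⟨hz1, hz2⟩) hCB) ?_
        have h7 : M * δ ≤ M * (z - Qt) := mul_le_mul_of_nonneg_left hdz hM0
        have h9 := hC z ⟨hz1, hz2⟩
        rw [hMδ] at h7
        linarith
    · show g Qt + ε = min B (g Qt + ε + M * (Qt - Qt))
      have he : g Qt + ε + M * (Qt - Qt) = g Qt + ε := by ring
      rw [he, min_eq_right hgB]
  rcases eq_or_lt_of_le hQtr with hR | hR
  · -- right endpoint: Qt = Qb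
    apply le_of_forall_pos_le_add
    intro ε hε
    apply csInf_le hbdd
    have hcw := hg Qt ⟨hQtl, hQtr⟩
    rw [Metric.continuousWithinAt_iff] at hcw
    obtain ⟨δ, hδ, hδ'⟩ := hcw ε hε
    set B := max C (g Qt + ε) with hBdef
    set M := (B - g Qt) / δ with hMdef
    have hCB : C ≤ B := le_max_left _ _
    have hgB : g Qt + ε ≤ B := le_max_right _ _
    have hM0 : 0 ≤ M := by
      apply div_nonneg _ hδ.le
      have := hC Qt ⟨hQtl, hQtr⟩
      linarith
    have hMδ : M * δ = B - g Qt := div_mul_cancel₀ _ (ne_of_gt hδ)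
    refine ⟨fun x => min B (g Qt + ε + -M * (x - Qt)), ?_, ?_, ?_, ?_⟩
    · exact Continuous.continuousOn (by fun_prop)
    · exact concave_min_const_affine' _ (convex_Icc _ _) B (g Qt + ε) (-M) Qt
    · intro z hz
      obtain ⟨hz1, hz2⟩ := hz
      have hz2' : z ≤ Qt := by rw [hR]; exact hz2
      by_cases hdz : dist z Qt < δ
      · have h8 := hδ' ⟨hz1, hz2⟩ hdz
        rw [Real.dist_eq] at h8
        have h6 : g z < g Qt + ε := by
          have := abs_lt.mp h8
          linarith [this.2]
        refine le_min (le_trans (hC z ⟨hz1, hz2⟩) hCB) ?_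
        have : 0 ≤ M * (Qt - z) := mul_nonneg hM0 (by linarith)
        nlinarith
      · push_neg at hdz
        rw [Real.dist_eq, abs_of_nonpos (by linarith)] at hdz
        refine le_min (le_trans (hC z ⟨hz1, hz2⟩) hCB) ?_
        have h7 : M * δ ≤ M * (Qt - z) := mul_le_mul_of_nonneg_left (by linarith) hM0
        have h9 := hC z ⟨hz1, hz2⟩
        rw [hMδ] at h7
        nlinarith
    · show g Qt + ε = min B (g Qt + ε + -M * (Qt - Qt))
      have he : g Qt + ε + -M * (Qt - Qt) = g Qt + ε := by ring
      rw [he, min_eq_right hgB]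
  · -- interior case
    apply csInf_le hbdd
    set R := (fun x => (g x - g Qt) / (x - Qt)) '' Set.Ioc Qt Qb with hRdef
    have hRne : R.Nonempty := ⟨_, ⟨Qb, ⟨hR, le_refl _⟩, rfl⟩⟩
    have hRbdd : BddAbove R := by
      refine ⟨(g Qt - g (-Qb)) / (Qt - (-Qb)), ?_⟩
      rintro r ⟨x, ⟨hx1, hx2⟩, rfl⟩
      exact key (-Qb) x le_rfl hL hx1 hx2
    set m := sSup R with hmdef
    have hmr : ∀ x, Qt < x → x ≤ Qb → (g x - g Qt) / (x - Qt) ≤ m :=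
      fun x h1 h2 => le_csSup hRbdd ⟨x, ⟨h1, h2⟩, rfl⟩
    have hml : ∀ x, -Qb ≤ x → x < Qt → m ≤ (g Qt - g x) / (Qt - x) := by
      intro x h1 h2
      apply csSup_le hRne
      rintro r ⟨y, ⟨hy1, hy2⟩, rfl⟩
      exact key x y h1 h2 hy1 hy2
    refine ⟨fun x => g Qt + m * (x - Qt), ?_, ?_, ?_, by simp⟩
    · exact Continuous.continuousOn (by fun_prop)
    · exact concave_affine' _ (convex_Icc _ _) (g Qt) m Qt
    · intro z hz
      obtain ⟨hz1, hz2⟩ := hz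
      rcases lt_trichotomy z Qt with hzt | hzt | hzt
      · have := hml z hz1 hzt
        rw [le_div_iff₀ (by linarith)] at this
        show g z ≤ g Qt + m * (z - Qt)
        nlinarith
      · simp [hzt]
      · have := hmr z hzt hz2
        rw [div_le_iff₀ (by linarith)] at this
        show g z ≤ g Qt + m * (z - Qt)
        nlinarith
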